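/- Let A be a finite abelian group of odd order k ≥ 3. Then for every positive integer m and every integer r with 0 ≤ r ≤ k − 1, the cycle graph C_{mk+r} is A-cordial. Equivalently, every cycle C_n with n ≥ k is A-cordial. -/

import Mathlib

/-- The edge labeling induced by a vertex labeling `c`: edge `{u, v}` gets label `c u + c v`. -/
def edgeLabel {V A : Type*} [AddCommMonoid A] (c : V → A) : Sym2 V → A :=
  Sym2.lift ⟨fun u v => c u + c v, fun _ _ => add_comm _ _⟩

/-- `c` is an `A`-cordial labeling of `G`: the vertex-label classes differ in size by at most
one, and the induced edge-label classes differ in size by at most one. -/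
def IsCordialLabeling {V A : Type*} [AddCommMonoid A] (G : SimpleGraph V) (c : V → A) : Prop :=
  (∀ a b : A, {v : V | c v = a}.ncard ≤ {v : V | c v = b}.ncard + 1) ∧
  (∀ a b : A, {e ∈ G.edgeSet | edgeLabel c e = a}.ncard ≤
      {e ∈ G.edgeSet | edgeLabel c e = b}.ncard + 1)

/-- A graph `G` is `A`-cordial if it admits an `A`-cordial labeling. -/
def IsCordial (A : Type*) [AddCommMonoid A] {V : Type*} (G : SimpleGraph V) : Prop :=
  ∃ c : V → A, IsCordialLabeling G c

section CordialAux


section helpers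
variable {α : Type*}

lemma periodic_add_mul (F : ℕ → α) (k : ℕ) (hper : ∀ t, F (t + k) = F t) :
    ∀ q t, F (t + q * k) = F t := by
  intro q
  induction q with
  | zero => simp
  | succ q ih =>
    intro t
    have h1 : t + (q + 1) * k = (t + q * k) + k := by ring
    rw [h1, hper, ih]

lemma periodic_mod (F : ℕ → α) (k : ℕ) (hk : 0 < k) (hper : ∀ t, F (t + k) = F t) :
    ∀ t, F t = F (t % k) := by
  intro t
  conv_lhs => rw [← Nat.mod_add_div' t k]
  rw [periodic_add_mul F k hper]

end helpers

lemma coprime_two_of_odd {n : ℕ} (h : Odd n) : Nat.gcd 2 n = 1 :=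
  Nat.prime_two.coprime_iff_not_dvd.mpr (by rw [Nat.odd_iff] at h; omega)

universe u

lemma exists_harmonious : ∀ (k : ℕ), Odd k →
    ∀ (A : Type u) [AddCommGroup A] [Fintype A], Fintype.card A = k →
    ∃ p : ℕ → A, (∀ t, p (t + k) = p t) ∧ Set.InjOn p (Set.Iio k) ∧
      Set.InjOn (fun t => p t + p (t + 1)) (Set.Iio k) := by
  intro k
  induction k using Nat.strong_induction_on with
  | _ k ih =>
  intro hodd A _ _ hcard
  have hkpos : 0 < k := hcard ▸ Fintype.card_pos
  rcases eq_or_lt_of_le (show 1 ≤ k from hkpos) with h1 | hk1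
  · -- k = 1
    refine ⟨fun _ => 0, fun t => rfl, ?_, ?_⟩ <;>
    · intro a ha b hb _
      simp only [Set.mem_Iio, ← h1] at ha hb
      omega
  · -- k > 1
    haveI : Nontrivial A := Fintype.one_lt_card_iff_nontrivial.mp (hcard ▸ hk1)
    obtain ⟨g, hg⟩ := exists_ne (0 : A)
    set H := AddSubgroup.zmultiples g with hH
    set h := addOrderOf g with hh
    have hgH : g ∈ H := AddSubgroup.mem_zmultiples g
    have hhpos : 0 < h := addOrderOf_pos g
    have hh1 : 1 < h := by
      have : h ≠ 1 := fun h1 => hg (AddMonoid.addOrderOf_eq_one_iff.mp h1)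
      omega
    set C := A ⧸ H with hC
    haveI : Finite C := Quotient.finite _
    haveI : Fintype C := Fintype.ofFinite C
    set c := Fintype.card C with hc
    have hkch : k = c * h := by
      have := AddSubgroup.card_eq_card_quotient_mul_card_addSubgroup H
      rw [Nat.card_eq_fintype_card (α := A), Nat.card_zmultiples, hcard] at this
      rw [this, Nat.card_eq_fintype_card]
    have hcpos : 0 < c := Fintype.card_pos
    have hck : c < k := by rw [hkch]; nlinarith
    have hoddc : Odd c := by
      rw [Nat.odd_iff] at hodd ⊢
      rcases Nat.even_or_odd c with he | ho
      · rw [Nat.even_iff] at he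
        have : k % 2 = 0 := by rw [hkch, Nat.mul_mod, he]; simp
        omega
      · exact Nat.odd_iff.mp ho
    have hoddh : Odd h := by
      rw [Nat.odd_iff] at hodd ⊢
      rcases Nat.even_or_odd h with he | ho
      · rw [Nat.even_iff] at he
        have : k % 2 = 0 := by rw [hkch, Nat.mul_mod, he]; simp
        omega
      · exact Nat.odd_iff.mp ho
    obtain ⟨γ, hγper, hγinj, hγsum⟩ := ih c hck hoddc C rfl
    have hγmod : ∀ t, γ t = γ (t % c) := periodic_mod γ c hcpos hγper
    set p : ℕ → A := fun t => (γ (t % c)).out + ((t / c) % h) • g with hp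
    have hπ : ∀ t, (QuotientAddGroup.mk (p t) : C) = γ (t % c) := by
      intro t
      have h0 : ((((t / c) % h) • g : A) : C) = 0 := by
        rw [← QuotientAddGroup.mk'_apply, map_nsmul, QuotientAddGroup.mk'_apply]
        rw [(QuotientAddGroup.eq_zero_iff g).mpr hgH]
        simp
      calc (QuotientAddGroup.mk (p t) : C)
          = ((γ (t % c)).out : C) + ((((t / c) % h) • g : A) : C) := rfl
        _ = γ (t % c) := by rw [h0, QuotientAddGroup.out_eq']; simp
    have hAg : addOrderOf g = h := hh.symm
    refine ⟨p, ?_, ?_, ?_⟩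
    · intro t
      have h1 : (t + k) % c = t % c := by rw [hkch, mul_comm c h, Nat.add_mul_mod_self_right]
      have h2 : (t + k) / c = t / c + h := by
        rw [hkch, mul_comm c h, Nat.add_mul_div_right _ _ hcpos]
      simp only [hp, h1, h2, Nat.add_mod_right]
    · intro t ht t' ht' heq
      simp only [Set.mem_Iio] at ht ht'
      have hmodc : t % c = t' % c := by
        have := congrArg (QuotientAddGroup.mk (s := H)) heq
        rw [hπ, hπ] at this
        exact hγinj (Set.mem_Iio.mpr (Nat.mod_lt _ hcpos)) (Set.mem_Iio.mpr (Nat.mod_lt _ hcpos)) this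
      have hdiv : t / c < h := (Nat.div_lt_iff_lt_mul hcpos).mpr (by rw [mul_comm]; omega)
      have hdiv' : t' / c < h := (Nat.div_lt_iff_lt_mul hcpos).mpr (by rw [mul_comm]; omega)
      have hsm : ((t / c) % h) • g = ((t' / c) % h) • g := by
        have h2 := heq
        simp only [hp, hmodc] at h2
        exact add_left_cancel h2
      have : t / c = t' / c := by
        have := nsmul_injOn_Iio_addOrderOf
          (Set.mem_Iio.mpr (hAg ▸ Nat.mod_lt (t / c) hhpos))
          (Set.mem_Iio.mpr (hAg ▸ Nat.mod_lt (t' / c) hhpos)) hsm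
        rwa [Nat.mod_eq_of_lt hdiv, Nat.mod_eq_of_lt hdiv'] at this
      calc t = c * (t / c) + t % c := (Nat.div_add_mod t c).symm
        _ = c * (t' / c) + t' % c := by rw [this, hmodc]
        _ = t' := Nat.div_add_mod t' c
    · intro t ht t' ht' heq
      simp only [Set.mem_Iio] at ht ht'
      simp only at heq
      -- quotient level
      have e1 : ∀ s : ℕ, (QuotientAddGroup.mk (p s + p (s+1)) : C) = γ (s % c) + γ (s % c + 1) := by
        intro s
        have h2 : (QuotientAddGroup.mk (p s + p (s+1)) : C) = γ (s % c) + γ ((s+1) % c) := by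
          rw [← hπ s, ← hπ (s+1)]; rfl
        rw [h2]
        congr 1
        rw [hγmod (s % c + 1)]
        congr 1
        rw [Nat.mod_add_mod]
      have hmodc : t % c = t' % c := by
        have h3 := congrArg (QuotientAddGroup.mk (s := H)) heq
        rw [e1, e1] at h3
        exact hγsum (Set.mem_Iio.mpr (Nat.mod_lt _ hcpos)) (Set.mem_Iio.mpr (Nat.mod_lt _ hcpos)) h3
      have hmodc1 : (t+1) % c = (t'+1) % c := by
        rw [← Nat.mod_add_mod, hmodc, Nat.mod_add_mod]
      have key : ∀ (a b x y x' y' : A), a + x + (b + y) = a + x' + (b + y') → x + y = x' + y' := by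
        intro a b x y x' y' hh
        have l : x + y + (a + b) = a + x + (b + y) := by abel
        have r : x' + y' + (a + b) = a + x' + (b + y') := by abel
        exact add_right_cancel (l.trans (hh.trans r.symm))
      have hsm : ((t / c) % h + ((t+1) / c) % h) • g = ((t' / c) % h + ((t'+1) / c) % h) • g := by
        have h2 := heq
        simp only [hp, hmodc, hmodc1] at h2
        rw [add_nsmul, add_nsmul]
        exact key _ _ _ _ _ _ h2
      have hmeq : (t / c) % h + ((t+1) / c) % h ≡ (t' / c) % h + ((t'+1) / c) % h [MOD h] :=
        hAg ▸ nsmul_eq_nsmul_iff_modEq.mp hsm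
      -- reduce mods
      have hme2 : t / c + (t+1) / c ≡ t' / c + (t'+1) / c [MOD h] := by
      -- combine with mod_modEq on each summand
        calc t / c + (t+1) / c
            ≡ (t / c) % h + ((t+1) / c) % h [MOD h] :=
              Nat.ModEq.add (Nat.mod_modEq _ _).symm (Nat.mod_modEq _ _).symm
          _ ≡ (t' / c) % h + ((t'+1) / c) % h [MOD h] := hmeq
          _ ≡ t' / c + (t'+1) / c [MOD h] :=
              Nat.ModEq.add (Nat.mod_modEq _ _) (Nat.mod_modEq _ _)
      -- structure: (t+1)/c = t/c + ε with ε depending only on t % c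
      have hstep : ∀ s : ℕ, (s+1) / c = s / c + (if s % c + 1 = c then 1 else 0) := by
        intro s
        have hdvd : (c ∣ s + 1) ↔ (s % c + 1 = c) := by
          rw [Nat.dvd_iff_mod_eq_zero, ← Nat.mod_add_mod]
          constructor
          · intro h0
            have h1 : s % c < c := Nat.mod_lt _ hcpos
            rcases Nat.lt_or_ge (s % c + 1) c with hlt | hge
            · rw [Nat.mod_eq_of_lt hlt] at h0; omega
            · omega
          · intro h0; rw [h0, Nat.mod_self]
        rw [Nat.succ_div]
        congr 1
        simp only [hdvd]
      rw [hstep t, hstep t', hmodc] at hme2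
      set ε := if t' % c + 1 = c then 1 else 0 with hε
      have h2i : 2 * (t / c) ≡ 2 * (t' / c) [MOD h] := by
        have : t / c + (t / c + ε) ≡ t' / c + (t' / c + ε) [MOD h] := hme2
        have h5 : 2 * (t / c) + ε ≡ 2 * (t' / c) + ε [MOD h] := by
          calc 2 * (t / c) + ε = t / c + (t / c + ε) := by ring
            _ ≡ t' / c + (t' / c + ε) [MOD h] := this
            _ = 2 * (t' / c) + ε := by ring
        exact Nat.ModEq.add_right_cancel' ε h5
      have hii : t / c ≡ t' / c [MOD h] :=
        Nat.ModEq.cancel_left_of_coprime (by rw [Nat.gcd_comm]; exact coprime_two_of_odd hoddh) h2i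
      have hdiv : t / c < h := (Nat.div_lt_iff_lt_mul hcpos).mpr (by rw [mul_comm]; omega)
      have hdiv' : t' / c < h := (Nat.div_lt_iff_lt_mul hcpos).mpr (by rw [mul_comm]; omega)
      have : t / c = t' / c := by
        have := hii
        unfold Nat.ModEq at this
        rwa [Nat.mod_eq_of_lt hdiv, Nat.mod_eq_of_lt hdiv'] at this
      calc t = c * (t / c) + t % c := (Nat.div_add_mod t c).symm
        _ = c * (t' / c) + t' % c := by rw [this, hmodc]
        _ = t' := Nat.div_add_mod t' c


open Multiset in
lemma map_pair_range {α : Type*} (Λ : ℕ → α) :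
    ∀ r : ℕ, Multiset.map Λ (Multiset.range (2 * r)) =
      Multiset.map (fun j => Λ (2 * j)) (Multiset.range r) +
      Multiset.map (fun j => Λ (2 * j + 1)) (Multiset.range r) := by
  intro r
  induction r with
  | zero => simp
  | succ r ih =>
    have h2 : 2 * (r + 1) = (2 * r + 1) + 1 := by ring
    rw [h2]
    simp only [Multiset.range_succ, Multiset.map_cons, ih, ← Multiset.singleton_add,
      Multiset.map_add, Multiset.map_singleton]
    abel

lemma map_range_eq_univ {A : Type*} [Fintype A] [DecidableEq A] {k : ℕ} (F : ℕ → A)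
    (hinj : Set.InjOn F (Set.Iio k)) (hcard : Fintype.card A = k) :
    Multiset.map F (Multiset.range k) = Finset.univ.val := by
  have hinj' : Set.InjOn F ↑(Finset.range k) := by rwa [Finset.coe_range]
  have himg : (Finset.range k).image F = Finset.univ := by
    apply Finset.eq_univ_of_card
    rw [Finset.card_image_of_injOn hinj', Finset.card_range, hcard]
  calc Multiset.map F (Multiset.range k) = ((Finset.range k).image F).val := by
        rw [Finset.image_val_of_injOn hinj']; rfl
    _ = Finset.univ.val := by rw [himg]

lemma map_range_mul {A : Type*} [Fintype A] [DecidableEq A] {k : ℕ} (F : ℕ → A)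
    (hper : ∀ t, F (t + k) = F t) (hinj : Set.InjOn F (Set.Iio k))
    (hcard : Fintype.card A = k) :
    ∀ m : ℕ, Multiset.map F (Multiset.range (m * k)) = m • Finset.univ.val := by
  intro m
  induction m with
  | zero => simp
  | succ m ih =>
    have h1 : (m + 1) * k = m * k + k := by ring
    rw [h1, Multiset.range_add, Multiset.map_add, ih, Multiset.map_map]
    have h2 : Multiset.map ((F ∘ fun x => m * k + x)) (Multiset.range k)
        = Multiset.map F (Multiset.range k) := by
      apply Multiset.map_congr rfl
      intro x _
      simp only [Function.comp_apply]
      rw [add_comm (m * k) x, periodic_add_mul F k hper]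
    rw [h2, map_range_eq_univ F hinj hcard, succ_nsmul]

lemma map_univ_fin {α : Type*} (n : ℕ) (F : ℕ → α) :
    Multiset.map (fun i : Fin n => F i.val) Finset.univ.val = Multiset.map F (Multiset.range n) := by
  rw [show (fun i : Fin n => F i.val) = F ∘ Fin.val from rfl, ← Multiset.map_map]
  congr 1
  have h1 := Fin.map_valEmbedding_univ (n := n)
  have h2 : (Finset.map Fin.valEmbedding (Finset.univ : Finset (Fin n))).val
      = Multiset.map Fin.val (Finset.univ : Finset (Fin n)).val := rfl
  rw [← h2, h1, Nat.Iio_eq_range]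
  rfl

lemma set_fiber_ncard {n : ℕ} {A : Type*} [DecidableEq A] (f : Fin n → A) (a : A) :
    {v : Fin n | f v = a}.ncard = Multiset.count a (Multiset.map f Finset.univ.val) := by
  have h1 : {v : Fin n | f v = a} = ↑(Finset.univ.filter (fun v => f v = a)) := by
    ext v; simp
  rw [h1, Set.ncard_coe_finset, Multiset.count_map, Finset.card_def, Finset.filter_val]
  congr 1
  apply Multiset.filter_congr
  intro x _
  exact eq_comm

lemma fin_succ_val {n : ℕ} [NeZero n] (hn : 3 ≤ n) (j : Fin n) :
    ((j + 1 : Fin n)).val = if j.val + 1 = n then 0 else j.val + 1 := by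
  rw [Fin.add_def]
  have h1 : (1 : Fin n).val = 1 := by rw [Fin.val_one']; exact Nat.mod_eq_of_lt (by omega)
  rw [h1]
  show (j.val + 1) % n = _
  rcases eq_or_ne (j.val + 1) n with he | hne
  · rw [if_pos he, he, Nat.mod_self]
  · rw [if_neg hne]
    exact Nat.mod_eq_of_lt (by have := j.isLt; omega)

open SimpleGraph

lemma cycleGraph_edgeSet_eq {n : ℕ} [NeZero n] (hn : 3 ≤ n) :
    (cycleGraph n).edgeSet = Set.range (fun i : Fin n => s(i, i + 1)) := by
  obtain ⟨n', rfl⟩ : ∃ n', n = n' + 2 := ⟨n - 2, by omega⟩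
  ext e
  induction e with
  | _ u v =>
    rw [mem_edgeSet, cycleGraph_adj]
    constructor
    · rintro (h | h)
      · refine ⟨v, ?_⟩
        rw [sub_eq_iff_eq_add] at h
        show s(v, v + 1) = s(u, v)
        rw [show u = v + 1 from by rw [h]; exact add_comm _ _]
        exact Sym2.eq_swap
      · refine ⟨u, ?_⟩
        rw [sub_eq_iff_eq_add] at h
        show s(u, u + 1) = s(u, v)
        rw [show v = u + 1 from by rw [h]; exact add_comm _ _]
    · rintro ⟨i, hi⟩
      rcases Sym2.eq_iff.mp hi.symm with ⟨h1, h2⟩ | ⟨h1, h2⟩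
      · right; rw [h1, h2]; exact add_sub_cancel_left i 1
      · left; rw [h1, h2]; exact add_sub_cancel_left i 1

lemma cycle_edge_inj {n : ℕ} [NeZero n] (hn : 3 ≤ n) :
    Function.Injective (fun i : Fin n => s(i, i + 1)) := by
  intro i j hij
  simp only [Sym2.eq_iff] at hij
  rcases hij with ⟨h1, _⟩ | ⟨h1, h2⟩
  · exact h1
  · exfalso
    have h4 : (j + 1) + 1 = j := by rw [← h1]; exact h2
    have hv := fin_succ_val hn j
    have hv2 := fin_succ_val hn (j + 1)
    have h5 := congrArg Fin.val h4
    rw [hv2, hv] at h5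
    have := j.isLt
    split_ifs at h5 <;> omega


end CordialAux

open SimpleGraph


/-- If `A` is a finite abelian group of odd order `k ≥ 3`, then the cycle `C_{mk+r}` is
`A`-cordial for every `m ≥ 1` and `0 ≤ r ≤ k - 1`. -/
theorem cycle_cordial_of_odd_order_long (A : Type*) [AddCommGroup A] [Fintype A]
    (k : ℕ) (hcard : Fintype.card A = k) (hodd : Odd k) (hk : 3 ≤ k)
    (m r : ℕ) (hm : 1 ≤ m) (hr : r ≤ k - 1) :
    IsCordial A (cycleGraph (m * k + r)) := by
  classical
  have hmk : k ≤ m * k := Nat.le_mul_of_pos_left k hm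
  set n := m * k + r with hn
  have hn3 : 3 ≤ n := by omega
  haveI : NeZero n := ⟨by omega⟩
  obtain ⟨p, hper, hpinj, hSinj⟩ := exists_harmonious k hodd A hcard
  set S : ℕ → A := fun t => p t + p (t + 1) with hS
  have hSper : ∀ t, S (t + k) = S t := by
    intro t
    show p (t + k) + p (t + k + 1) = p t + p (t + 1)
    rw [hper t, show t + k + 1 = (t + 1) + k from by ring, hper (t + 1)]
  set ψ : ℕ → ℕ := fun x => if x < 2 * r then x / 2 else x - r with hψ
  set c : Fin n → A := fun i => p (ψ i.val) with hc
  set D : ℕ → A := fun j => p j + p j with hD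
  set Λ : ℕ → A := fun i =>
    if i < 2 * r then (if i % 2 = 0 then D (i / 2) else S (i / 2)) else S (i - r) with hΛdef
  -- pointwise edge labels
  have hΛ : ∀ i : Fin n, c i + c (i + 1) = Λ i.val := by
    intro i
    have hiv := i.isLt
    have hval := fin_succ_val hn3 i
    rcases eq_or_ne (i.val + 1) n with he | hne
    · -- wrap-around edge
      rw [if_pos he] at hval
      show p (ψ i.val) + p (ψ (i + 1).val) = Λ i.val
      rw [hval]
      have hψ0 : ψ 0 = 0 := by
        simp only [hψ]
        split_ifs <;> omega
      have hψi : ψ i.val = m * k - 1 := by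
        simp only [hψ]
        rw [if_neg (by omega)]
        omega
      have hΛi : Λ i.val = S (m * k - 1) := by
        simp only [hΛdef]
        rw [if_neg (by omega)]
        congr 1
        omega
      rw [hψ0, hψi, hΛi]
      show _ = p (m * k - 1) + p (m * k - 1 + 1)
      rw [show m * k - 1 + 1 = 0 + m * k from by omega, periodic_add_mul p k hper]
    · rw [if_neg hne] at hval
      show p (ψ i.val) + p (ψ (i + 1).val) = Λ i.val
      rw [hval]
      set x := i.val with hx
      rcases Nat.lt_or_ge x (2 * r) with hlt | hge
      · rcases Nat.even_or_odd x with hev | hod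
        · rw [Nat.even_iff] at hev
          have h1 : ψ x = x / 2 := by simp only [hψ]; rw [if_pos hlt]
          have h2 : ψ (x + 1) = x / 2 := by
            simp only [hψ]; rw [if_pos (by omega)]; omega
          have h3 : Λ x = D (x / 2) := by
            simp only [hΛdef]; rw [if_pos hlt, if_pos hev]
          rw [h1, h2, h3]
        · rw [Nat.odd_iff] at hod
          have h1 : ψ x = x / 2 := by simp only [hψ]; rw [if_pos hlt]
          have h2 : ψ (x + 1) = x / 2 + 1 := by
            simp only [hψ]
            split_ifs <;> omega
          have h3 : Λ x = S (x / 2) := by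
            simp only [hΛdef]; rw [if_pos hlt, if_neg (by omega)]
          rw [h1, h2, h3]
      · have h1 : ψ x = x - r := by simp only [hψ]; rw [if_neg (by omega)]
        have h2 : ψ (x + 1) = (x - r) + 1 := by
          simp only [hψ]; rw [if_neg (by omega)]; omega
        have h3 : Λ x = S (x - r) := by simp only [hΛdef]; rw [if_neg (by omega)]
        rw [h1, h2, h3]
  -- vertex label multiset
  have hMv : Multiset.map c Finset.univ.val
      = Multiset.map p (Multiset.range r) + m • Finset.univ.val := by
    rw [hc, map_univ_fin n (fun x => p (ψ x))]
    rw [show n = 2 * r + (m * k - r) from by omega, Multiset.range_add, Multiset.map_add]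
    rw [map_pair_range (fun x => p (ψ x)) r]
    have e1 : Multiset.map (fun j => p (ψ (2 * j))) (Multiset.range r)
        = Multiset.map p (Multiset.range r) := by
      apply Multiset.map_congr rfl
      intro j hj
      rw [Multiset.mem_range] at hj
      congr 1
      simp only [hψ]; rw [if_pos (by omega)]; omega
    have e2 : Multiset.map (fun j => p (ψ (2 * j + 1))) (Multiset.range r)
        = Multiset.map p (Multiset.range r) := by
      apply Multiset.map_congr rfl
      intro j hj
      rw [Multiset.mem_range] at hj
      congr 1
      simp only [hψ]; rw [if_pos (by omega)]; omega
    have e3 : Multiset.map ((fun x => p (ψ x)) ∘ (fun x => 2 * r + x)) (Multiset.range (m * k - r))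
        = Multiset.map (fun x => p (r + x)) (Multiset.range (m * k - r)) := by
      apply Multiset.map_congr rfl
      intro x _
      simp only [Function.comp_apply]
      congr 1
      simp only [hψ]; rw [if_neg (by omega)]; omega
    rw [Multiset.map_map, e1, e2, e3]
    have e4 : Multiset.map p (Multiset.range r)
          + Multiset.map (fun x => p (r + x)) (Multiset.range (m * k - r))
        = m • Finset.univ.val := by
      rw [show (fun x => p (r + x)) = p ∘ (fun x => r + x) from rfl,
        ← Multiset.map_map p (fun x => r + x), ← Multiset.map_add, ← Multiset.range_add,
        show r + (m * k - r) = m * k from by omega]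
      exact map_range_mul p hper hpinj hcard m
    rw [add_assoc, e4]
  -- edge label multiset
  have hMe : Multiset.map (fun i : Fin n => Λ i.val) Finset.univ.val
      = Multiset.map D (Multiset.range r) + m • Finset.univ.val := by
    rw [map_univ_fin n Λ]
    rw [show n = 2 * r + (m * k - r) from by omega, Multiset.range_add, Multiset.map_add]
    rw [map_pair_range Λ r]
    have e1 : Multiset.map (fun j => Λ (2 * j)) (Multiset.range r)
        = Multiset.map D (Multiset.range r) := by
      apply Multiset.map_congr rfl
      intro j hj
      rw [Multiset.mem_range] at hj
      simp only [hΛdef]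
      rw [if_pos (by omega), if_pos (by omega)]
      congr 1
      omega
    have e2 : Multiset.map (fun j => Λ (2 * j + 1)) (Multiset.range r)
        = Multiset.map S (Multiset.range r) := by
      apply Multiset.map_congr rfl
      intro j hj
      rw [Multiset.mem_range] at hj
      simp only [hΛdef]
      rw [if_pos (by omega), if_neg (by omega)]
      congr 1
      omega
    have e3 : Multiset.map (Λ ∘ (fun x => 2 * r + x)) (Multiset.range (m * k - r))
        = Multiset.map (fun x => S (r + x)) (Multiset.range (m * k - r)) := by
      apply Multiset.map_congr rfl
      intro x _
      simp only [Function.comp_apply, hΛdef]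
      rw [if_neg (by omega)]
      congr 1
      omega
    rw [Multiset.map_map, e1, e2, e3]
    have e4 : Multiset.map S (Multiset.range r)
          + Multiset.map (fun x => S (r + x)) (Multiset.range (m * k - r))
        = m • Finset.univ.val := by
      rw [show (fun x => S (r + x)) = S ∘ (fun x => r + x) from rfl,
        ← Multiset.map_map S (fun x => r + x), ← Multiset.map_add, ← Multiset.range_add,
        show r + (m * k - r) = m * k from by omega]
      exact map_range_mul S hSper hSinj hcard m
    rw [add_assoc, e4]
  -- two-torsion-free
  have h2tf : ∀ x y : A, x + x = y + y → x = y := by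
    intro x y hxy
    have hd : (x - y) + (x - y) = 0 := by
      rw [sub_add_sub_comm, hxy, sub_self]
    have h2 : (2 : ℕ) • (x - y) = 0 := by rw [two_nsmul]; exact hd
    have hdvd2 : addOrderOf (x - y) ∣ 2 := addOrderOf_dvd_of_nsmul_eq_zero h2
    have hdvdk : addOrderOf (x - y) ∣ k := hcard ▸ addOrderOf_dvd_card
    have : addOrderOf (x - y) ∣ Nat.gcd 2 k := Nat.dvd_gcd hdvd2 hdvdk
    have hcop : Nat.gcd 2 k = 1 :=
      Nat.prime_two.coprime_iff_not_dvd.mpr (by rw [Nat.odd_iff] at hodd; omega)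
    rw [hcop] at this
    have hd0 : x - y = 0 := AddMonoid.addOrderOf_eq_one_iff.mp (Nat.dvd_one.mp this)
    rwa [sub_eq_zero] at hd0
  -- nodup facts
  have hnodup_p : (Multiset.map p (Multiset.range r)).Nodup := by
    apply Multiset.Nodup.map_on _ (Multiset.nodup_range r)
    intro x hx y hy hxy
    rw [Multiset.mem_range] at hx hy
    exact hpinj (Set.mem_Iio.mpr (by omega)) (Set.mem_Iio.mpr (by omega)) hxy
  have hnodup_D : (Multiset.map D (Multiset.range r)).Nodup := by
    apply Multiset.Nodup.map_on _ (Multiset.nodup_range r)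
    intro x hx y hy hxy
    rw [Multiset.mem_range] at hx hy
    have : p x = p y := h2tf _ _ hxy
    exact hpinj (Set.mem_Iio.mpr (by omega)) (Set.mem_Iio.mpr (by omega)) this
  -- counting in multiset
  have hcount_univ : ∀ a : A, Multiset.count a (m • (Finset.univ.val : Multiset A)) = m := by
    intro a
    rw [Multiset.count_nsmul,
      Multiset.count_eq_one_of_mem Finset.univ.nodup (Finset.mem_val.mpr (Finset.mem_univ a))]
    ring
  refine ⟨c, ?_, ?_⟩
  · -- vertex balance
    intro a b
    rw [set_fiber_ncard c a, set_fiber_ncard c b, hMv]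
    rw [Multiset.count_add, Multiset.count_add, hcount_univ, hcount_univ]
    have ha := Multiset.nodup_iff_count_le_one.mp hnodup_p a
    omega
  · -- edge balance
    intro a b
    set E : Fin n → Sym2 (Fin n) := fun i => s(i, i + 1) with hE
    have hset : ∀ x : A, {e ∈ (cycleGraph n).edgeSet | edgeLabel c e = x}
        = E '' {i : Fin n | Λ i.val = x} := by
      intro x
      rw [cycleGraph_edgeSet_eq hn3]
      ext e
      constructor
      · rintro ⟨⟨i, rfl⟩, hlab⟩
        refine ⟨i, ?_, rfl⟩
        show Λ i.val = x
        rw [← hΛ i]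
        exact hlab
      · rintro ⟨i, hi, rfl⟩
        refine ⟨⟨i, rfl⟩, ?_⟩
        show edgeLabel c (E i) = x
        have : edgeLabel c (E i) = c i + c (i + 1) := rfl
        rw [this, hΛ i]
        exact hi
    rw [hset a, hset b,
      Set.ncard_image_of_injective _ (cycle_edge_inj hn3),
      Set.ncard_image_of_injective _ (cycle_edge_inj hn3),
      set_fiber_ncard (fun i : Fin n => Λ i.val) a,
      set_fiber_ncard (fun i : Fin n => Λ i.val) b, hMe]
    rw [Multiset.count_add, Multiset.count_add, hcount_univ, hcount_univ]
    have ha := Multiset.nodup_iff_count_le_one.mp hnodup_D a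
    omega
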